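/- (Quadratic Hereditary.) Let ρ be a positive integer, let Q ∈ ℝ^{n×n} and G₀ ∈ ℝ^{n×n} be symmetric, and for k = 0,…,ρ let Wₖ ∈ ℝ^{n×n} be symmetric positive definite and Sₖ ∈ ℝ^{n×q_k} have linearly independent columns. Assume Sₖᵀ·Wₖ·Sᵢ = 0 whenever 0 ≤ i < k ≤ ρ. Define iteratively G_{k+1} := Q + (I − Wₖ·P(Sₖ,Wₖ))·(Gₖ − Q)·(I − P(Sₖ,Wₖ)·Wₖ), where P(Sₖ,Wₖ) := Sₖ(SₖᵀWₖSₖ)⁻¹Sₖᵀ. Then G_{k+1}·Sᵢ = Q·Sᵢ for all 0 ≤ i ≤ k ≤ ρ; moreover, if the total number of columns q₀ + ⋯ + q_ρ equals n, then G_{ρ+1} = Q. -/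

import Mathlib

open Matrix

/-- The projection-type matrix `P(S,W) := S (Sᵀ W S)⁻¹ Sᵀ`. -/
noncomputable def projMat {n q : ℕ} (S : Matrix (Fin n) (Fin q) ℝ)
    (W : Matrix (Fin n) (Fin n) ℝ) : Matrix (Fin n) (Fin n) ℝ :=
  S * (Sᵀ * W * S)⁻¹ * Sᵀ

private lemma mulVec_eq_sum_cols {m p : ℕ} (M : Matrix (Fin m) (Fin p) ℝ) (x : Fin p → ℝ) :
    M *ᵥ x = ∑ j, x j • Mᵀ j := by
  ext i
  simp [mulVec, dotProduct, mul_comm]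

private lemma mulVec_inj {m : ℕ} {S : Matrix (Fin m) (Fin p) ℝ}
    (hS : LinearIndependent ℝ (fun j : Fin p => Sᵀ j)) {x : Fin p → ℝ}
    (hx : S *ᵥ x = 0) : x = 0 := by
  have := Fintype.linearIndependent_iff.mp hS x (by rw [← mulVec_eq_sum_cols]; exact hx)
  funext j; exact this j

private lemma posDef_conj {m p : ℕ} {S : Matrix (Fin m) (Fin p) ℝ}
    {W : Matrix (Fin m) (Fin m) ℝ} (hW : W.PosDef)
    (hS : LinearIndependent ℝ (fun j : Fin p => Sᵀ j)) :
    (Sᵀ * W * S).PosDef := by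
  refine posDef_iff_dotProduct_mulVec.mpr ⟨?_, ?_⟩
  · have hWs : Wᵀ = W := hW.isHermitian
    show (Sᵀ * W * S)ᴴ = _
    rw [conjTranspose_mul, conjTranspose_mul]
    simp only [conjTranspose_eq_transpose_of_trivial, transpose_transpose, hWs, Matrix.mul_assoc]
  · intro x hx
    have hSx : S *ᵥ x ≠ 0 := fun h => hx (mulVec_inj hS h)
    have := hW.dotProduct_mulVec_pos hSx
    simpa [star_trivial, ← mulVec_mulVec, dotProduct_mulVec, vecMul_transpose] using this

/-- Quadratic Hereditary property of the least-change updates. -/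
theorem stmt3 {n : ℕ} (ρ : ℕ) (hρ : 0 < ρ)
    (Q G₀ : Matrix (Fin n) (Fin n) ℝ) (hQ : Q.IsSymm) (hG₀ : G₀.IsSymm)
    (q : ℕ → ℕ)
    (W : ℕ → Matrix (Fin n) (Fin n) ℝ)
    (S : (k : ℕ) → Matrix (Fin n) (Fin (q k)) ℝ)
    (hW : ∀ k ≤ ρ, (W k).PosDef)
    (hSli : ∀ k ≤ ρ, LinearIndependent ℝ (fun j : Fin (q k) => (S k)ᵀ j))
    (horth : ∀ i k : ℕ, i < k → k ≤ ρ → (S k)ᵀ * W k * S i = 0)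
    (G : ℕ → Matrix (Fin n) (Fin n) ℝ)
    (hG0 : G 0 = G₀)
    (hrec : ∀ k ≤ ρ, G (k + 1) =
      Q + (1 - W k * projMat (S k) (W k)) * (G k - Q) * (1 - projMat (S k) (W k) * W k)) :
    (∀ i k : ℕ, i ≤ k → k ≤ ρ → G (k + 1) * S i = Q * S i) ∧
    ((∑ i ∈ Finset.range (ρ + 1), q i) = n → G (ρ + 1) = Q) := by
  -- invertibility of `Sₖᵀ Wₖ Sₖ`
  have hPD : ∀ k ≤ ρ, ((S k)ᵀ * W k * S k).PosDef := fun k hk =>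
    posDef_conj (hW k hk) (hSli k hk)
  have hinv : ∀ k ≤ ρ, ((S k)ᵀ * W k * S k)⁻¹ * ((S k)ᵀ * W k * S k) = 1 := fun k hk =>
    Matrix.nonsing_inv_mul _ (hPD k hk).det_pos.ne'.isUnit
  -- action of `P W` on the `Sᵢ`
  have hPW : ∀ k ≤ ρ, ∀ i, projMat (S k) (W k) * W k * S i
      = S k * (((S k)ᵀ * W k * S k)⁻¹ * ((S k)ᵀ * W k * S i)) := by
    intro k hk i
    simp only [projMat, Matrix.mul_assoc]
  have hPWk : ∀ k ≤ ρ, projMat (S k) (W k) * W k * S k = S k := by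
    intro k hk
    rw [hPW k hk k, hinv k hk, Matrix.mul_one]
  have hPWi : ∀ i k, i < k → k ≤ ρ → projMat (S k) (W k) * W k * S i = 0 := by
    intro i k hik hk
    rw [hPW k hk i, horth i k hik hk, Matrix.mul_zero, Matrix.mul_zero]
  -- key computation
  have key : ∀ k ≤ ρ, ∀ i, G (k + 1) * S i
      = Q * S i + (1 - W k * projMat (S k) (W k)) * ((G k - Q) * (S i - projMat (S k) (W k) * W k * S i)) := by
    intro k hk i
    rw [hrec k hk]
    simp only [Matrix.add_mul, Matrix.mul_assoc, Matrix.sub_mul, Matrix.one_mul]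
  -- hereditary property
  have main : ∀ k ≤ ρ, ∀ i ≤ k, G (k + 1) * S i = Q * S i := by
    intro k
    induction k with
    | zero =>
      intro hk i hi
      interval_cases i
      rw [key 0 hk 0, hPWk 0 hk, sub_self, Matrix.mul_zero, Matrix.mul_zero, add_zero]
    | succ k ih =>
      intro hk i hi
      rcases Nat.lt_or_ge i (k + 1) with h | h
      · have hGi : G (k + 1) * S i = Q * S i := ih (Nat.le_of_succ_le hk) i (Nat.lt_succ_iff.mp h)
        have hz : (G (k + 1) - Q) * S i = 0 := by rw [Matrix.sub_mul, hGi, sub_self]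
        rw [key (k+1) hk i, hPWi i (k+1) h hk, sub_zero, hz, Matrix.mul_zero, add_zero]
      · have : i = k + 1 := le_antisymm hi h
        subst this
        rw [key (k+1) hk (k+1), hPWk (k+1) hk, sub_self, Matrix.mul_zero, Matrix.mul_zero, add_zero]
  refine ⟨fun i k hik hk => main k hk i hik, fun hsum => ?_⟩
  -- Part 2: the columns of the Sᵢ span ℝⁿ
  have hA : ∀ i ≤ ρ, (G (ρ + 1) - Q) * S i = 0 := by
    intro i hi
    rw [Matrix.sub_mul, main ρ le_rfl i hi, sub_self]
  set A := G (ρ + 1) - Q with hAdef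
  -- the family of all columns
  set v : (Σ k : Fin (ρ + 1), Fin (q k)) → (Fin n → ℝ) := fun p => (S p.1)ᵀ p.2 with hv
  have hvli : LinearIndependent ℝ v := by
    rw [Fintype.linearIndependent_iff]
    intro g hg
    -- downward induction on the block index
    have aux : ∀ t : ℕ, ∀ m : Fin (ρ + 1), ρ - (m : ℕ) < t → ∀ j, g ⟨m, j⟩ = 0 := by
      intro t
      induction t with
      | zero => intro m hm; exact absurd hm (Nat.not_lt_zero _)
      | succ t iht =>
        intro m hm j
        have hmρ : (m : ℕ) ≤ ρ := Nat.lt_succ_iff.mp m.isLt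
        -- higher blocks vanish
        have hhigh : ∀ p : Σ k : Fin (ρ + 1), Fin (q k), (m : ℕ) < (p.1 : ℕ) → g p = 0 := by
          intro p hk
          have hp : (p.1 : ℕ) ≤ ρ := Nat.lt_succ_iff.mp p.1.isLt
          have hlt : ρ - (p.1 : ℕ) < t := by omega
          obtain ⟨k, j'⟩ := p
          exact iht k hlt j'
        -- apply `(S m)ᵀ * W m` to the relation
        have h0 : (∑ p, g p • (((S (m : ℕ))ᵀ * W (m : ℕ)) *ᵥ v p)) = 0 := by
          have hc := congrArg (Matrix.mulVecLin ((S (m : ℕ))ᵀ * W (m : ℕ))) hg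
          simpa only [map_sum, _root_.map_smul, Matrix.mulVecLin_apply, map_zero] using hc
        have hcol : ∀ p : Σ k : Fin (ρ + 1), Fin (q k),
            ((S (m : ℕ))ᵀ * W (m : ℕ)) *ᵥ v p = (((S (m : ℕ))ᵀ * W (m : ℕ) * S (p.1 : ℕ))ᵀ) p.2 := by
          intro p
          ext r
          simp [hv, Matrix.mulVec, Matrix.mul_apply, dotProduct]
        have h0' : (∑ k' : Fin (ρ + 1), ∑ j' : Fin (q (k' : ℕ)),
            g ⟨k', j'⟩ • ((S (m : ℕ))ᵀ * W (m : ℕ)) *ᵥ v ⟨k', j'⟩) = 0 := by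
          rw [← h0, ← Finset.univ_sigma_univ, Finset.sum_sigma]
        have h1 : (∑ j' : Fin (q (m : ℕ)), g ⟨m, j'⟩ •
            (((S (m : ℕ))ᵀ * W (m : ℕ) * S (m : ℕ))ᵀ) j') = 0 := by
          rw [← h0', Finset.sum_eq_single m]
          · apply Finset.sum_congr rfl
            intro j' _
            rw [hcol ⟨m, j'⟩]
          · intro k _ hkm
            rcases Nat.lt_or_ge (k : ℕ) (m : ℕ) with hlt | hge
            · apply Finset.sum_eq_zero
              intro j' _
              rw [hcol ⟨k, j'⟩, horth (k : ℕ) (m : ℕ) hlt hmρ]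
              ext r
              simp
            · have hne : (k : ℕ) ≠ (m : ℕ) := fun h => hkm (Fin.ext h)
              have : (m : ℕ) < (k : ℕ) := by omega
              apply Finset.sum_eq_zero
              intro j' _
              rw [hhigh ⟨k, j'⟩ this, zero_smul]
          · intro hm'; exact absurd (Finset.mem_univ m) hm'
        -- conclude via invertibility
        have h2 : ((S (m : ℕ))ᵀ * W (m : ℕ) * S (m : ℕ)) *ᵥ (fun j' => g ⟨m, j'⟩) = 0 := by
          rw [mulVec_eq_sum_cols]; exact h1
        have hker := Matrix.mulVec_injective_iff_isUnit.mpr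
          ((hPD (m : ℕ) hmρ).det_pos.ne'.isUnit |> (Matrix.isUnit_iff_isUnit_det _).mpr)
        have : (fun j' => g ⟨m, j'⟩) = (0 : Fin (q (m : ℕ)) → ℝ) := by
          apply hker
          rw [h2, Matrix.mulVec_zero]
        exact congrFun this j
    intro ⟨m, j⟩
    exact aux (ρ + 1) m (by omega) j
  -- cardinality
  have hcard : Fintype.card (Σ k : Fin (ρ + 1), Fin (q k)) = Module.finrank ℝ (Fin n → ℝ) := by
    rw [Module.finrank_fin_fun]
    simp only [Fintype.card_sigma, Fintype.card_fin]
    rw [Fin.sum_univ_eq_sum_range]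
    exact hsum
  have hspan := hvli.span_eq_top_of_card_eq_finrank' hcard
  -- A annihilates every column, hence A = 0
  have hAv : ∀ p : Σ k : Fin (ρ + 1), Fin (q k), A *ᵥ v p = 0 := by
    intro p
    have := hA (p.1 : ℕ) (Nat.lt_succ_iff.mp p.1.isLt)
    have hc : A *ᵥ v p = (A * S (p.1 : ℕ))ᵀ p.2 := by
      ext r
      simp [hv, Matrix.mulVec, Matrix.mul_apply, dotProduct]
    rw [hc, this]
    rfl
  have hmv : ∀ x : Fin n → ℝ, A *ᵥ x = 0 := by
    intro x
    have hx : x ∈ Submodule.span ℝ (Set.range v) := hspan ▸ Submodule.mem_top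
    induction hx using Submodule.span_induction with
    | mem y hy => obtain ⟨p, rfl⟩ := hy; exact hAv p
    | zero => simp
    | add y z _ _ hy hz => rw [Matrix.mulVec_add, hy, hz, add_zero]
    | smul c y _ hy => rw [Matrix.mulVec_smul, hy, smul_zero]
  have : A = 0 := by
    ext i j
    have := congrFun (hmv (Pi.single j 1)) i
    simpa [Matrix.mulVec_single] using this
  have := sub_eq_zero.mp this
  exact this
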